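/- arXiv:1606.01724 — 2 statements merged into one kernel-verified Lean document; each statement's English description precedes it below -/
import Mathlib

section
/- Let a > 0. Then g(r;a) > 0 for all r ∈ (0,∞) if and only if w'(r;a) > 0 for all r ∈ (0,∞), where g(r;a) = -|f'(r;a)|^{p-2} f'(r;a) and w(r;a) = ρ(r) g(r;a) with ρ(r) = r^{N-1} e^r. -/
open Real Set Filter MeasureTheory

/-- `f` is a solution of the profile equation with parameter `a`:
`f` is C¹ on `[0,∞)` with derivative `f'`, the map `r ↦ |f'(r)|^{p-2} f'(r)` is C¹ on `[0,∞)`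
with derivative `F'`, the ODE
`(|f'|^{p-2}f')'(r) + ((N-1)/r)(|f'|^{p-2}f')(r) + f(r) - |f'(r)|^{p-1} = 0` holds for `r > 0`,
and `f 0 = a`, `f' 0 = 0`. -/
def IsProfileSol (N : ℕ) (p a : ℝ) (f f' F' : ℝ → ℝ) : Prop :=
  (∀ r ∈ Ici (0:ℝ), HasDerivWithinAt f (f' r) (Ici 0) r) ∧
  ContinuousOn f' (Ici 0) ∧
  (∀ r ∈ Ici (0:ℝ), HasDerivWithinAt (fun s => |f' s| ^ (p - 2) * f' s) (F' r) (Ici 0) r) ∧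
  ContinuousOn F' (Ici 0) ∧
  (∀ r, 0 < r →
    F' r + (((N : ℝ) - 1) / r) * (|f' r| ^ (p - 2) * f' r) + f r - |f' r| ^ (p - 1) = 0) ∧
  f 0 = a ∧ f' 0 = 0

/-- `g(r;a) = -|f'(r;a)|^{p-2} f'(r;a)`. -/
noncomputable def gFun (p : ℝ) (f' : ℝ → ℝ) (r : ℝ) : ℝ := -(|f' r| ^ (p - 2) * f' r)

/-- `ρ(r) = r^{N-1} e^r`. -/
noncomputable def rho (N : ℕ) (r : ℝ) : ℝ := r ^ (N - 1) * Real.exp r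

/-- the derivative of `ρ`. -/
noncomputable def rho' (N : ℕ) (r : ℝ) : ℝ :=
  (((N : ℝ) - 1) * r ^ (N - 2) + r ^ (N - 1)) * Real.exp r

/-- `w(r;a) = ρ(r) g(r;a)`. -/
noncomputable def wFun (N : ℕ) (p : ℝ) (f' : ℝ → ℝ) (r : ℝ) : ℝ := rho N r * gFun p f' r

/-- the derivative `w'(r;a) = ρ'(r) g(r;a) + ρ(r) g'(r;a)`, where `g' = -F'`. -/
noncomputable def wDeriv (N : ℕ) (p : ℝ) (f' F' : ℝ → ℝ) (r : ℝ) : ℝ :=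
  rho' N r * gFun p f' r - rho N r * F' r

/- ### Auxiliary lemmas -/

lemma rho_hasDerivAt (N : ℕ) (hN : 2 ≤ N) (r : ℝ) : HasDerivAt (rho N) (rho' N r) r := by
  have h := (hasDerivAt_pow (N - 1) r).mul (Real.hasDerivAt_exp r)
  refine h.congr_deriv ?_
  have h1 : N - 1 - 1 = N - 2 := by omega
  have h2 : ((N - 1 : ℕ) : ℝ) = (N : ℝ) - 1 := by
    have : 1 ≤ N := by omega
    push_cast [Nat.cast_sub this]
    ring
  rw [rho', h1, h2]; ring

lemma rho_key (N : ℕ) (hN : 2 ≤ N) (r : ℝ) (hr : 0 < r) :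
    rho' N r = (((N : ℝ) - 1) / r) * rho N r + rho N r := by
  obtain ⟨m, rfl⟩ : ∃ m, N = m + 2 := ⟨N - 2, by omega⟩
  simp only [rho, rho']
  have h1 : m + 2 - 1 = m + 1 := by omega
  have h2 : m + 2 - 2 = m := by omega
  rw [h1, h2]
  have : r ^ (m + 1) = r * r ^ m := by ring
  rw [this]
  field_simp

lemma rho_pos (N : ℕ) (r : ℝ) (hr : 0 < r) : 0 < rho N r :=
  mul_pos (pow_pos hr _) (Real.exp_pos r)

lemma rho_zero (N : ℕ) (hN : 2 ≤ N) : rho N 0 = 0 := by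
  have : N - 1 ≠ 0 := by omega
  simp [rho, zero_pow this]

lemma rho_mono (N : ℕ) {r s : ℝ} (hr : 0 ≤ r) (hrs : r ≤ s) : rho N r ≤ rho N s :=
  mul_le_mul (pow_le_pow_left₀ hr hrs _) (Real.exp_le_exp.2 hrs) (Real.exp_pos r).le
    (pow_nonneg (hr.trans hrs) _)

lemma g_eq (p : ℝ) (f' : ℝ → ℝ) (r : ℝ) (h : f' r < 0) :
    gFun p f' r = |f' r| ^ (p - 1) := by
  have habs : |f' r| = -(f' r) := abs_of_neg h
  have hpos : (0:ℝ) < |f' r| := abs_pos.2 h.ne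
  have : |f' r| ^ (p - 1) = |f' r| ^ (p - 2) * |f' r| ^ (1:ℝ) := by
    rw [← Real.rpow_add hpos]; ring_nf
  rw [this, Real.rpow_one, gFun, habs]; ring

lemma fneg_of_g_pos (p : ℝ) (f' : ℝ → ℝ) (r : ℝ) (h : 0 < gFun p f' r) : f' r < 0 := by
  by_contra hc
  push_neg at hc
  have : gFun p f' r ≤ 0 := by
    rw [gFun]
    have : 0 ≤ |f' r| ^ (p - 2) * f' r :=
      mul_nonneg (Real.rpow_nonneg (abs_nonneg _) _) hc
    linarith
  linarith

lemma wFun_hasDeriv (N : ℕ) (hN : 2 ≤ N) (p : ℝ) (f f' F' : ℝ → ℝ)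
    (hF : ∀ r ∈ Ici (0:ℝ), HasDerivWithinAt (fun s => |f' s| ^ (p - 2) * f' s) (F' r) (Ici 0) r)
    (r : ℝ) (hr : r ∈ Ici (0:ℝ)) :
    HasDerivWithinAt (wFun N p f') (wDeriv N p f' F' r) (Ici 0) r := by
  have hg : HasDerivWithinAt (gFun p f') (-(F' r)) (Ici 0) r := (hF r hr).neg
  have hρ : HasDerivWithinAt (rho N) (rho' N r) (Ici 0) r :=
    (rho_hasDerivAt N hN r).hasDerivWithinAt
  have := hρ.mul hg
  refine this.congr_deriv ?_
  rw [wDeriv]; ring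

/-- The key identity: for `r > 0`,
`w'(r) = ρ(r) (g(r) + f(r) - |f'(r)|^{p-1})`. -/
lemma wDeriv_eq (N : ℕ) (hN : 2 ≤ N) (p a : ℝ) (f f' F' : ℝ → ℝ)
    (hf : IsProfileSol N p a f f' F') (r : ℝ) (hr : 0 < r) :
    wDeriv N p f' F' r = rho N r * (gFun p f' r + f r - |f' r| ^ (p - 1)) := by
  have hode := hf.2.2.2.2.1 r hr
  have hF' : F' r = (((N : ℝ) - 1) / r) * gFun p f' r - f r + |f' r| ^ (p - 1) := by
    rw [gFun]; linear_combination hode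
  rw [wDeriv, hF', rho_key N hN r hr]
  ring

/-- `g(·;a) > 0` on `(0,∞)` iff `w'(·;a) > 0` on `(0,∞)`. -/
theorem stmt7 (N : ℕ) (hN : 2 ≤ N) (p : ℝ)
    (hp1 : 2 * (N : ℝ) / ((N : ℝ) + 1) < p) (hp2 : p < 2)
    (a : ℝ) (ha : 0 < a)
    (f f' F' : ℝ → ℝ) (hf : IsProfileSol N p a f f' F') :
    (∀ r, 0 < r → 0 < gFun p f' r) ↔ (∀ r, 0 < r → 0 < wDeriv N p f' F' r) := by
  obtain ⟨hfd, hf'c, hFd, hF'c, hode, hf0, hf'0⟩ := hf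
  have hIoi : Ioi (0:ℝ) ⊆ Ici 0 := Ioi_subset_Ici le_rfl
  have hwd : ∀ r ∈ Ici (0:ℝ),
      HasDerivWithinAt (wFun N p f') (wDeriv N p f' F' r) (Ici 0) r :=
    wFun_hasDeriv N hN p f f' F' hFd
  have hwcont : ContinuousOn (wFun N p f') (Ici 0) :=
    fun r hr => (hwd r hr).continuousWithinAt
  constructor
  · -- forward direction
    intro hg
    -- f' < 0 on (0,∞), and w' = ρ f there
    have hf'neg : ∀ r, 0 < r → f' r < 0 := fun r hr => fneg_of_g_pos p f' r (hg r hr)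
    have hwkey : ∀ r, 0 < r → wDeriv N p f' F' r = rho N r * f r := by
      intro r hr
      rw [wDeriv_eq N hN p a f f' F' ⟨hfd, hf'c, hFd, hF'c, hode, hf0, hf'0⟩ r hr,
        ← g_eq p f' r (hf'neg r hr)]
      ring
    -- f is strictly decreasing on [0,∞)
    have hanti : StrictAntiOn f (Ici 0) := by
      apply strictAntiOn_of_hasDerivWithinAt_neg (convex_Ici 0)
        (fun r hr => (hfd r hr).continuousWithinAt)
      · intro x hx
        rw [interior_Ici] at hx ⊢
        exact (hfd x (hIoi hx)).mono hIoi
      · intro x hx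
        rw [interior_Ici] at hx
        exact hf'neg x hx
    -- f > 0 on (0,∞)
    have hfpos : ∀ r, 0 < r → 0 < f r := by
      intro r hr
      by_contra hc
      push_neg at hc
      set r2 := r + 1 with hr2def
      have hr2 : 0 < r2 := by positivity
      have hfr2 : f r2 < 0 :=
        lt_of_lt_of_le (hanti (hIoi hr) (hIoi hr2) (by simp [hr2def])) hc
      set c := rho N r2 * f r2 with hcdef
      have hcneg : c < 0 := mul_neg_of_pos_of_neg (rho_pos N r2 hr2) hfr2
      -- w' ≤ c on [r2, ∞)
      have hbound : ∀ s, r2 ≤ s → wDeriv N p f' F' s ≤ c := by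
        intro s hs
        have hs0 : 0 < s := lt_of_lt_of_le hr2 hs
        have hfs : f s ≤ f r2 := by
          rcases eq_or_lt_of_le hs with h | h
          · rw [← h]
          · exact (hanti (hIoi hr2) (hIoi hs0) h).le
        have h1 : rho N s * f s ≤ rho N s * f r2 :=
          mul_le_mul_of_nonneg_left hfs (rho_pos N s hs0).le
        have h2 : rho N s * f r2 ≤ rho N r2 * f r2 :=
          mul_le_mul_of_nonpos_right (rho_mono N hr2.le hs) hfr2.le
        rw [hwkey s hs0]
        exact h1.trans h2
      -- u := w - c • id is antitone on [r2, ∞)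
      set u : ℝ → ℝ := fun s => wFun N p f' s - c * s with hudef
      have huanti : AntitoneOn u (Ici r2) := by
        apply antitoneOn_of_hasDerivWithinAt_nonpos (convex_Ici r2)
          (hwcont.mono (Ici_subset_Ici.2 hr2.le)
            |>.sub ((continuous_const.mul continuous_id).continuousOn))
          (f' := fun s => wDeriv N p f' F' s - c)
        · intro x hx
          rw [interior_Ici] at hx ⊢
          have hx0 : x ∈ Ici (0:ℝ) := (lt_of_lt_of_le hr2 hx.le).le
          exact ((hwd x hx0).mono (fun y hy => (lt_of_lt_of_le hr2 (le_of_lt hy)).le)).sub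
            (((hasDerivAt_id x).const_mul c).hasDerivWithinAt.congr_deriv (by ring))
        · intro x hx
          rw [interior_Ici] at hx
          have := hbound x hx.le
          linarith
      -- choose R large enough that w R would have to be negative
      have hwr2pos : 0 < wFun N p f' r2 :=
        mul_pos (rho_pos N r2 hr2) (hg r2 hr2)
      set R := r2 + (wFun N p f' r2 + 1) / (-c) with hRdef
      have hRge : r2 ≤ R := by
        have h0 : 0 ≤ (wFun N p f' r2 + 1) / (-c) :=
          div_nonneg (by linarith) (by linarith)
        rw [hRdef]
        exact le_add_of_nonneg_right h0
      have hR0 : 0 < R := lt_of_lt_of_le hr2 hRge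
      have huRu : u R ≤ u r2 := huanti (self_mem_Ici) hRge hRge
      have hwR : wFun N p f' R ≤ wFun N p f' r2 + c * (R - r2) := by
        simp only [hudef] at huRu
        linarith
      have hcR : c * (R - r2) = -(wFun N p f' r2 + 1) := by
        have hcne : c ≠ 0 := hcneg.ne
        rw [hRdef, add_sub_cancel_left, mul_comm, div_mul_eq_mul_div,
          div_eq_iff (neg_ne_zero.2 hcne)]
        ring
      have : wFun N p f' R ≤ -1 := by rw [hcR] at hwR; linarith
      have : 0 < wFun N p f' R :=
        mul_pos (rho_pos N R hR0) (hg R hR0)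
      linarith
    intro r hr
    rw [hwkey r hr]
    exact mul_pos (rho_pos N r hr) (hfpos r hr)
  · -- reverse direction
    intro hw r hr
    have hmono : StrictMonoOn (wFun N p f') (Ici 0) := by
      apply strictMonoOn_of_hasDerivWithinAt_pos (convex_Ici 0) hwcont
        (f' := wDeriv N p f' F')
      · intro x hx
        rw [interior_Ici] at hx ⊢
        exact (hwd x (hIoi hx)).mono hIoi
      · intro x hx
        rw [interior_Ici] at hx
        exact hw x hx
    have hw0 : wFun N p f' 0 = 0 := by
      rw [wFun, rho_zero N hN]; ring
    have hwpos : 0 < wFun N p f' r := by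
      have := hmono (self_mem_Ici) (hIoi hr) hr
      rwa [hw0] at this
    by_contra hc
    push_neg at hc
    have : wFun N p f' r ≤ 0 :=
      mul_nonpos_iff.2 (Or.inl ⟨(rho_pos N r hr).le, hc⟩)
    linarith
end

section
/- Let a > 0. Then there exists r > 0 with f(r;a) = 0 if and only if there exists r > 0 with g(r;a) = 0, where g(r;a) = -|f'(r;a)|^{p-2} f'(r;a); equivalently, the first zero R(a) of f(·;a) is finite if and only if the first positive zero R_1(a) of g(·;a) is finite. -/
open Real Set Filter MeasureTheory
open scoped Topology

open Topology in
private lemma absG_eq {p : ℝ} (hp : 1 < p) (x : ℝ) :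
    abs (|x| ^ (p - 2) * x) = |x| ^ (p - 1) := by
  rcases eq_or_ne x 0 with h | h
  · simp [h, Real.zero_rpow (show p - 1 ≠ 0 by linarith)]
  · rw [abs_mul, abs_of_nonneg (Real.rpow_nonneg (abs_nonneg x) _),
      show p - 1 = p - 2 + 1 by ring, Real.rpow_add_one (abs_ne_zero.mpr h)]

private lemma hasDerivAt_rho {N : ℕ} (hN : 2 ≤ N) (r : ℝ) :
    HasDerivAt (rho N) (rho' N r) r := by
  have h1 : HasDerivAt (fun x : ℝ => x ^ (N - 1) * Real.exp x)
      ((↑(N - 1) * r ^ (N - 1 - 1)) * Real.exp r + r ^ (N - 1) * Real.exp r) r :=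
    (hasDerivAt_pow (N - 1) r).mul (Real.hasDerivAt_exp r)
  have hc : ((N - 1 : ℕ) : ℝ) = (N : ℝ) - 1 := by
    have h1N : (1:ℕ) ≤ N := by omega
    push_cast [Nat.cast_sub h1N]
    ring
  have he : N - 1 - 1 = N - 2 := by omega
  have h2 : rho' N r
      = (↑(N - 1) * r ^ (N - 1 - 1)) * Real.exp r + r ^ (N - 1) * Real.exp r := by
    rw [rho', hc, he]; ring
  rw [h2]
  exact h1

/-- `f(·;a)` has a positive zero iff `g(·;a)` has a positive zero. -/
theorem stmt8 (N : ℕ) (hN : 2 ≤ N) (p : ℝ)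
    (hp1 : 2 * (N : ℝ) / ((N : ℝ) + 1) < p) (hp2 : p < 2)
    (a : ℝ) (ha : 0 < a)
    (f f' F' : ℝ → ℝ) (hf : IsProfileSol N p a f f' F') :
    (∃ r, 0 < r ∧ f r = 0) ↔ (∃ r, 0 < r ∧ gFun p f' r = 0) := by
  obtain ⟨hfd, hf'c, hGd, hF'c, hODE, hf0, hf'0⟩ := hf
  have hN2 : (2:ℝ) ≤ (N:ℝ) := by exact_mod_cast hN
  have h1p : (1:ℝ) < p := by
    have h : (1:ℝ) < 2 * (N:ℝ) / ((N:ℝ) + 1) := by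
      rw [lt_div_iff₀ (by linarith)]
      linarith
    linarith
  -- basic facts
  have habsg : ∀ r, |gFun p f' r| = |f' r| ^ (p - 1) := by
    intro r
    rw [gFun, abs_neg]
    exact absG_eq h1p (f' r)
  have hgcont : ContinuousOn (gFun p f') (Ici 0) := by
    have h : ContinuousOn (fun s => |f' s| ^ (p - 2) * f' s) (Ici (0:ℝ)) :=
      fun r hr => (hGd r hr).continuousWithinAt
    exact h.neg
  have hfcont : ContinuousOn f (Ici 0) := fun r hr => (hfd r hr).continuousWithinAt
  have hrhopos : ∀ r : ℝ, 0 < r → 0 < rho N r :=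
    fun r hr => mul_pos (pow_pos hr _) (Real.exp_pos r)
  have hwd : ∀ r ∈ Ici (0:ℝ), HasDerivWithinAt (wFun N p f') (wDeriv N p f' F' r) (Ici 0) r := by
    intro r hr
    have h1 := ((hasDerivAt_rho hN r).hasDerivWithinAt (s := Ici (0:ℝ))).mul ((hGd r hr).neg)
    have h2 : wDeriv N p f' F' r
        = rho' N r * -(|f' r| ^ (p - 2) * f' r) + rho N r * -(F' r) := by
      simp only [wDeriv, gFun]; ring
    rw [h2]
    exact h1
  have hwcont : ContinuousOn (wFun N p f') (Ici 0) :=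
    fun r hr => (hwd r hr).continuousWithinAt
  -- the key identity for the derivative of w
  have hkey : ∀ r : ℝ, 0 < r →
      wDeriv N p f' F' r = rho N r * (gFun p f' r + f r - |f' r| ^ (p - 1)) := by
    intro r hr
    have hode := hODE r hr
    have hpow : r ^ (N - 1) = r ^ (N - 2) * r := by
      rw [← pow_succ]
      congr 1
      omega
    have hF' : F' r = |f' r| ^ (p - 1) - f r
        - (((N:ℝ) - 1) / r) * (|f' r| ^ (p - 2) * f' r) := by linarith
    simp only [wDeriv, rho, rho', gFun, hF', hpow]
    field_simp
    ring
  -- positivity of g and w near the origin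
  obtain ⟨δ, hδpos, hδg, hδw⟩ : ∃ δ > 0, (∀ s ∈ Ioc (0:ℝ) δ, 0 < gFun p f' s)
      ∧ (∀ s ∈ Ioc (0:ℝ) δ, 0 < wFun N p f' s) := by
    have hg0 : gFun p f' 0 = 0 := by simp [gFun, hf'0]
    have hw0 : wFun N p f' 0 = 0 := by
      simp [wFun, rho, zero_pow (show N - 1 ≠ 0 by omega)]
    have ht1 : Tendsto (gFun p f') (𝓝[Ici 0] 0) (𝓝 0) := by
      have h := (hgcont 0 self_mem_Ici).tendsto
      rwa [hg0] at h
    have ht2 : Tendsto f (𝓝[Ici 0] 0) (𝓝 a) := by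
      have h := (hfcont 0 self_mem_Ici).tendsto
      rwa [hf0] at h
    have h1 : ∀ᶠ s in 𝓝[Ici (0:ℝ)] 0, |gFun p f' s| < a/8 :=
      ht1.eventually (p := fun y => |y| < a/8)
        ((isOpen_lt continuous_abs continuous_const).eventually_mem
          (by simp only [mem_setOf_eq, abs_zero]; linarith))
    have h2 : ∀ᶠ s in 𝓝[Ici (0:ℝ)] 0, a/2 < f s :=
      ht2.eventually (p := fun y => a/2 < y)
        ((isOpen_lt continuous_const continuous_id).eventually_mem
          (by simp only [mem_setOf_eq, id]; linarith))
    obtain ⟨ε, hε, hsub⟩ := Metric.mem_nhdsWithin_iff.mp (h1.and h2)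
    have hprop : ∀ s ∈ Icc (0:ℝ) (ε/2), |gFun p f' s| < a/8 ∧ a/2 < f s := by
      intro s hs
      apply hsub
      refine ⟨?_, hs.1⟩
      rw [Metric.mem_ball, Real.dist_eq, sub_zero, abs_of_nonneg hs.1]
      linarith [hs.2]
    have hwmono : StrictMonoOn (wFun N p f') (Icc 0 (ε/2)) := by
      apply strictMonoOn_of_hasDerivWithinAt_pos (convex_Icc _ _)
          (hwcont.mono Icc_subset_Ici_self) (f' := wDeriv N p f' F')
          (fun x hx => ?_) (fun x hx => ?_)
      · rw [interior_Icc] at hx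
        exact (hwd x hx.1.le).mono (by rw [interior_Icc]; intro y hy; exact hy.1.le)
      · rw [interior_Icc] at hx
        rw [hkey x hx.1]
        apply mul_pos (hrhopos x hx.1)
        obtain ⟨hga, hfa⟩ := hprop x ⟨hx.1.le, hx.2.le⟩
        have he1 := habsg x
        have he2 := neg_abs_le (gFun p f' x)
        linarith [abs_nonneg (gFun p f' x)]
    have hwpos : ∀ s ∈ Ioc (0:ℝ) (ε/2), 0 < wFun N p f' s := by
      intro s hs
      have h := hwmono (left_mem_Icc.mpr (by linarith)) ⟨hs.1.le, hs.2⟩ hs.1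
      rwa [hw0] at h
    refine ⟨ε/2, by linarith, fun s hs => ?_, hwpos⟩
    have hw := hwpos s hs
    have hρ := hrhopos s hs.1
    by_contra hcg
    push_neg at hcg
    simp only [wFun] at hw
    nlinarith
  constructor
  · -- f has a zero → g has a zero
    rintro ⟨r₀, hr₀, hfr₀⟩
    by_contra hcon
    push_neg at hcon
    have hgall : ∀ r : ℝ, 0 < r → 0 < gFun p f' r := by
      intro r hr
      rcases le_or_gt r δ with h | h
      · exact hδg r ⟨hr, h⟩
      · by_contra hle
        push_neg at hle
        have hlt : gFun p f' r < 0 := lt_of_le_of_ne hle (hcon r hr)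
        have hδg' : 0 < gFun p f' δ := hδg δ ⟨hδpos, le_refl δ⟩
        have hcont' : ContinuousOn (gFun p f') (Icc δ r) :=
          hgcont.mono (fun y hy => le_trans hδpos.le hy.1)
        obtain ⟨c, hc, hc0⟩ := intermediate_value_Icc' h.le hcont' ⟨hlt.le, hδg'.le⟩
        exact hcon c (lt_of_lt_of_le hδpos hc.1) hc0
    have hanti : StrictAntiOn f (Ici 0) := by
      apply strictAntiOn_of_hasDerivWithinAt_neg (convex_Ici 0) hfcont (f' := f')
          (fun x hx => ?_) (fun x hx => ?_)
      · rw [interior_Ici] at hx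
        exact (hfd x (Ioi_subset_Ici_self hx)).mono (by rw [interior_Ici]; intro y hy; exact Ioi_subset_Ici_self hy)
      · rw [interior_Ici] at hx
        have hg := hgall x hx
        by_contra hge
        push_neg at hge
        have h0 : 0 ≤ |f' x| ^ (p - 2) * f' x :=
          mul_nonneg (Real.rpow_nonneg (abs_nonneg _) _) hge
        simp only [gFun] at hg
        linarith
    have hfr₀1 : f (r₀ + 1) < 0 := by
      have h : f (r₀ + 1) < f r₀ :=
        hanti (show r₀ ∈ Ici (0:ℝ) from hr₀.le)
          (show r₀ + 1 ∈ Ici (0:ℝ) from by simp only [mem_Ici]; linarith) (by linarith)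
      rwa [hfr₀] at h
    set c : ℝ := -f (r₀ + 1) with hc
    have hcpos : 0 < c := by rw [hc]; linarith
    have hG1 : |f' (r₀ + 1)| ^ (p - 2) * f' (r₀ + 1) < 0 := by
      have h := hgall (r₀ + 1) (by linarith)
      simp only [gFun] at h
      linarith
    set R : ℝ := r₀ + 1 + (1 - (|f' (r₀ + 1)| ^ (p - 2) * f' (r₀ + 1))) / c with hR
    have hRr : r₀ + 1 < R := by
      have h : 0 < (1 - (|f' (r₀ + 1)| ^ (p - 2) * f' (r₀ + 1))) / c :=
        div_pos (by linarith) hcpos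
      rw [hR]; linarith
    have hmono : MonotoneOn (fun r => |f' r| ^ (p - 2) * f' r - c * r) (Icc (r₀ + 1) R) := by
      apply monotoneOn_of_hasDerivWithinAt_nonneg (convex_Icc _ _)
          (f' := fun r => F' r - c) ?_ (fun x hx => ?_) (fun x hx => ?_)
      · have hGc : ContinuousOn (fun s => |f' s| ^ (p - 2) * f' s) (Ici (0:ℝ)) :=
          fun r hr => (hGd r hr).continuousWithinAt
        exact (hGc.mono (fun y hy => le_trans (by linarith : (0:ℝ) ≤ r₀ + 1) hy.1)).sub
          ((continuous_const.mul continuous_id).continuousOn)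
      · rw [interior_Icc] at hx
        have hx0 : (0:ℝ) ≤ x := by linarith [hx.1]
        have hid : HasDerivAt (fun y : ℝ => c * y) c x := by
          simpa using (hasDerivAt_id x).const_mul c
        exact ((hGd x hx0).sub hid.hasDerivWithinAt).mono
          (by rw [interior_Icc]; intro y hy; simp only [mem_Ici]; linarith [hy.1])
      · rw [interior_Icc] at hx
        have hxpos : 0 < x := by linarith [hx.1]
        have hode := hODE x hxpos
        have hGx : |f' x| ^ (p - 2) * f' x < 0 := by
          have h := hgall x hxpos
          simp only [gFun] at h
          linarith
        have hfx : f x < f (r₀ + 1) :=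
          hanti (show r₀ + 1 ∈ Ici (0:ℝ) from by simp only [mem_Ici]; linarith)
            (show x ∈ Ici (0:ℝ) from by simp only [mem_Ici]; linarith) hx.1
        have habs : 0 ≤ |f' x| ^ (p - 1) := Real.rpow_nonneg (abs_nonneg _) _
        have hdiv : 0 ≤ ((N:ℝ) - 1) / x := div_nonneg (by linarith) hxpos.le
        have hterm : (((N:ℝ) - 1) / x) * (|f' x| ^ (p - 2) * f' x) ≤ 0 :=
          mul_nonpos_of_nonneg_of_nonpos hdiv hGx.le
        simp only [sub_nonneg]
        rw [hc]
        linarith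
    have hle := hmono (left_mem_Icc.mpr hRr.le) (right_mem_Icc.mpr hRr.le) hRr.le
    have hGR : |f' R| ^ (p - 2) * f' R < 0 := by
      have h := hgall R (by linarith)
      simp only [gFun] at h
      linarith
    have hcR : c * R = c * (r₀ + 1) + (1 - (|f' (r₀ + 1)| ^ (p - 2) * f' (r₀ + 1))) := by
      rw [hR]
      field_simp
    simp only at hle
    linarith
  · -- g has a zero → f has a zero
    rintro ⟨r₁, hr₁, hgr₁⟩
    by_contra hcon
    push_neg at hcon
    have hfpos : ∀ r : ℝ, 0 ≤ r → 0 < f r := by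
      intro r hr
      rcases eq_or_lt_of_le hr with h | h
      · rw [← h, hf0]; exact ha
      · by_contra hle
        push_neg at hle
        have hlt : f r < 0 := lt_of_le_of_ne hle (hcon r h)
        obtain ⟨cc, hcc, hcc0⟩ := intermediate_value_Icc' h.le
          (hfcont.mono (fun y hy => hy.1)) ⟨hlt.le, by rw [hf0]; exact ha.le⟩
        have hccpos : 0 < cc := by
          rcases eq_or_lt_of_le hcc.1 with h' | h'
          · exfalso; rw [← h', hf0] at hcc0; linarith
          · exact h'
        exact hcon cc hccpos hcc0
    have hr₁δ : δ < r₁ := by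
      by_contra hle
      push_neg at hle
      have h := hδg r₁ ⟨hr₁, hle⟩
      rw [hgr₁] at h
      exact lt_irrefl 0 h
    set S : Set ℝ := Icc δ r₁ ∩ (gFun p f') ⁻¹' {0} with hS
    have hSne : S.Nonempty := ⟨r₁, ⟨⟨hr₁δ.le, le_refl r₁⟩, hgr₁⟩⟩
    have hSbdd : BddBelow S := ⟨δ, fun x hx => hx.1.1⟩
    have hSclosed : IsClosed S :=
      (hgcont.mono (fun y hy => le_trans hδpos.le hy.1)).preimage_isClosed_of_isClosed
        isClosed_Icc isClosed_singleton
    set m : ℝ := sInf S with hm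
    have hmS : m ∈ S := hSclosed.csInf_mem hSne hSbdd
    have hmδ : δ ≤ m := hmS.1.1
    have hgm : gFun p f' m = 0 := hmS.2
    have hδm : δ < m := by
      rcases eq_or_lt_of_le hmδ with h | h
      · exfalso
        have hg := hδg δ ⟨hδpos, le_refl δ⟩
        rw [h, hgm] at hg
        exact lt_irrefl 0 hg
      · exact h
    have hgpos' : ∀ s ∈ Ico δ m, 0 < gFun p f' s := by
      intro s hs
      rcases lt_trichotomy (gFun p f' s) 0 with h | h | h
      · exfalso
        have hδg' := hδg δ ⟨hδpos, le_refl δ⟩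
        obtain ⟨cc, hcc, hcc0⟩ := intermediate_value_Icc' hs.1
          (hgcont.mono (fun y hy => le_trans hδpos.le hy.1)) ⟨h.le, hδg'.le⟩
        have hccS : cc ∈ S :=
          ⟨⟨hcc.1, le_trans hcc.2 (le_trans hs.2.le hmS.1.2)⟩, hcc0⟩
        have hmc := csInf_le hSbdd hccS
        rw [← hm] at hmc
        linarith [hcc.2, hs.2]
      · exfalso
        have hsS : s ∈ S := ⟨⟨hs.1, le_trans hs.2.le hmS.1.2⟩, h⟩
        have hmc := csInf_le hSbdd hsS
        rw [← hm] at hmc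
        linarith [hs.2]
      · exact h
    have hwmono2 : StrictMonoOn (wFun N p f') (Icc δ m) := by
      apply strictMonoOn_of_hasDerivWithinAt_pos (convex_Icc _ _)
          (hwcont.mono (fun y hy => le_trans hδpos.le hy.1)) (f' := wDeriv N p f' F')
          (fun x hx => ?_) (fun x hx => ?_)
      · rw [interior_Icc] at hx
        exact (hwd x (le_of_lt (lt_trans hδpos hx.1))).mono
          (by rw [interior_Icc]; intro y hy; exact le_of_lt (lt_trans hδpos hy.1))
      · rw [interior_Icc] at hx
        have hx0 : 0 < x := lt_trans hδpos hx.1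
        rw [hkey x hx0]
        have hgx : 0 < gFun p f' x := hgpos' x ⟨hx.1.le, hx.2⟩
        have hP : |f' x| ^ (p - 1) = gFun p f' x := by rw [← habsg x, abs_of_pos hgx]
        rw [hP]
        have h3 : rho N x * (gFun p f' x + f x - gFun p f' x) = rho N x * f x := by ring
        rw [h3]
        exact mul_pos (hrhopos x hx0) (hfpos x hx0.le)
    have hwδ : 0 < wFun N p f' δ := hδw δ ⟨hδpos, le_refl δ⟩
    have hlt := hwmono2 (left_mem_Icc.mpr hδm.le) (right_mem_Icc.mpr hδm.le) hδm
    have hwm : wFun N p f' m = 0 := by simp [wFun, hgm]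
    linarith
end
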